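/- Let r, r' be real numbers in [0,1], and let ψ = ρ(√(1−r²), r) and φ = ρ(√(1−r'²), r') be the corresponding pure qubit states. There exists a finite family {K_n} of incoherent 2×2 complex matrices with ∑_n K_n† K_n = I and ∑_n K_n ψ K_n† = φ if and only if r' ≤ r, i.e., if and only if C_{l₁}(ψ) ≥ C_{l₁}(φ). -/

import Mathlib

open Matrix

/-- A 2×2 complex matrix is incoherent if each of its columns has at most one
nonzero entry. -/
def Incoherent (K : Matrix (Fin 2) (Fin 2) ℂ) : Prop :=
  ∀ j i i' : Fin 2, K i j ≠ 0 → K i' j ≠ 0 → i = i'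

/-- The qubit state `ρ(z,r) = (1/2) [[1+z, r], [r, 1-z]]`. -/
noncomputable def qubit (z r : ℝ) : Matrix (Fin 2) (Fin 2) ℂ :=
  (1 / 2 : ℂ) • !![1 + (z : ℂ), (r : ℂ); (r : ℂ), 1 - (z : ℂ)]

lemma offdiag_entry (z r : ℝ) (K : Matrix (Fin 2) (Fin 2) ℂ) (hK : Incoherent K) :
    (K * qubit z r * Kᴴ) 0 1
      = (r/2 : ℂ) * (K 0 0 * star (K 1 1) + K 0 1 * star (K 1 0)) := by
  have h0 : K 0 0 * star (K 1 0) = 0 := by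
    by_cases h : K 0 0 = 0
    · simp [h]
    · by_cases h' : K 1 0 = 0
      · simp [h']
      · exact absurd (hK 0 0 1 h h') (by decide)
  have h1 : K 0 1 * star (K 1 1) = 0 := by
    by_cases h : K 0 1 = 0
    · simp [h]
    · by_cases h' : K 1 1 = 0
      · simp [h']
      · exact absurd (hK 1 0 1 h h') (by decide)
  simp only [qubit, Matrix.mul_apply, Fin.sum_univ_two, Matrix.conjTranspose_apply,
    Matrix.smul_apply, Matrix.of_apply, cons_val', cons_val_zero, cons_val_one, head_cons,
    head_fin_const, empty_val', cons_val_fin_one, smul_eq_mul]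
  linear_combination ((1 + (z:ℂ))/2) * h0 + ((1 - (z:ℂ))/2) * h1

lemma io_mono (z z' r r' : ℝ) (hr0 : 0 ≤ r) (hr'0 : 0 ≤ r') (n : ℕ)
    (K : Fin n → Matrix (Fin 2) (Fin 2) ℂ)
    (hinc : ∀ i, Incoherent (K i)) (hcomp : ∑ i, (K i)ᴴ * K i = 1)
    (hmap : ∑ i, K i * qubit z r * (K i)ᴴ = qubit z' r') : r' ≤ r := by
  set S : Fin n → ℝ := fun i => Complex.normSq (K i 0 0) + Complex.normSq (K i 0 1)
    + Complex.normSq (K i 1 0) + Complex.normSq (K i 1 1) with hSdef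
  have e : ∀ w : ℂ, (star w * w).re = Complex.normSq w := by
    intro w
    rw [show star w = (starRingEnd ℂ) w from rfl, ← Complex.normSq_eq_conj_mul_self,
      Complex.ofReal_re]
  have hS : ∑ i, S i = 2 := by
    have h00 := congrArg (fun M => (M 0 0).re) hcomp
    have h11 := congrArg (fun M => (M 1 1).re) hcomp
    simp only [Matrix.sum_apply, Matrix.mul_apply, Fin.sum_univ_two,
      Matrix.conjTranspose_apply, Matrix.one_apply_eq, Complex.one_re,
      Complex.add_re, Complex.re_sum, e] at h00 h11
    have hsplit : ∑ i, S i = (∑ x, (Complex.normSq (K x 0 0) + Complex.normSq (K x 1 0)))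
        + (∑ x, (Complex.normSq (K x 0 1) + Complex.normSq (K x 1 1))) := by
      rw [← Finset.sum_add_distrib]
      exact Finset.sum_congr rfl fun i _ => by simp [hSdef]; ring
    rw [hsplit, h00, h11]; norm_num
  have hsum : (r' : ℂ)/2
      = ∑ i, (r/2 : ℂ) * (K i 0 0 * star (K i 1 1) + K i 0 1 * star (K i 1 0)) := by
    have h := congrArg (fun M => M 0 1) hmap
    simp only [Matrix.sum_apply] at h
    rw [show ((r':ℂ)/2) = qubit z' r' 0 1 by simp [qubit]; ring, ← h]
    exact Finset.sum_congr rfl fun i _ => offdiag_entry z r (K i) (hinc i)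
  have habs : r'/2 ≤ r/2 := by
    have step1 : r'/2 = ‖(r':ℂ)/2‖ := by
      rw [norm_div, Complex.norm_of_nonneg hr'0]; simp
    have step2 : ‖(r':ℂ)/2‖
        ≤ ∑ i, ‖(r/2 : ℂ) * (K i 0 0 * star (K i 1 1) + K i 0 1 * star (K i 1 0))‖ := by
      rw [hsum]; exact norm_sum_le _ _
    have step3 : ∀ i : Fin n,
        ‖(r/2 : ℂ) * (K i 0 0 * star (K i 1 1) + K i 0 1 * star (K i 1 0))‖
          ≤ (r/2) * (S i / 2) := by
      intro i
      rw [norm_mul]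
      have hr2 : ‖(r:ℂ)/2‖ = r/2 := by
        rw [norm_div, Complex.norm_of_nonneg hr0]; simp
      rw [hr2]
      apply mul_le_mul_of_nonneg_left _ (by linarith)
      calc ‖K i 0 0 * star (K i 1 1) + K i 0 1 * star (K i 1 0)‖
          ≤ ‖K i 0 0 * star (K i 1 1)‖ + ‖K i 0 1 * star (K i 1 0)‖ :=
            norm_add_le _ _
        _ = ‖K i 0 0‖ * ‖K i 1 1‖
            + ‖K i 0 1‖ * ‖K i 1 0‖ := by
            simp [norm_mul, Complex.norm_conj,
              show ∀ w : ℂ, star w = (starRingEnd ℂ) w from fun _ => rfl]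
        _ ≤ S i / 2 := by
            simp only [hSdef]
            nlinarith [sq_nonneg (‖K i 0 0‖ - ‖K i 1 1‖),
              sq_nonneg (‖K i 0 1‖ - ‖K i 1 0‖),
              Complex.sq_norm (K i 0 0), Complex.sq_norm (K i 0 1),
              Complex.sq_norm (K i 1 0), Complex.sq_norm (K i 1 1)]
    calc r'/2 = ‖(r':ℂ)/2‖ := step1
      _ ≤ _ := step2
      _ ≤ ∑ i, (r/2) * (S i / 2) := Finset.sum_le_sum fun i _ => step3 i
      _ = (r/2) * ((∑ i, S i)/2) := by rw [Finset.sum_div, Finset.mul_sum]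
      _ = r/2 := by rw [hS]; ring
  linarith

lemma incoh_diag (x y : ℂ) : Incoherent !![x, 0; 0, y] := by
  intro j i i' h h'
  fin_cases j <;> fin_cases i <;> fin_cases i' <;> simp_all

lemma incoh_anti (x y : ℂ) : Incoherent !![0, x; y, 0] := by
  intro j i i' h h'
  fin_cases j <;> fin_cases i <;> fin_cases i' <;> simp_all

lemma complete_lemma (α β γ δ : ℝ) (h1 : α^2 + δ^2 = 1) (h2 : β^2 + γ^2 = 1) :
    (!![(α:ℂ), 0; 0, (β:ℂ)])ᴴ * !![(α:ℂ), 0; 0, (β:ℂ)]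
      + (!![0, (γ:ℂ); (δ:ℂ), 0])ᴴ * !![0, (γ:ℂ); (δ:ℂ), 0] = 1 := by
  have c1 := congrArg (fun x : ℝ => (x : ℂ)) h1
  have c2 := congrArg (fun x : ℝ => (x : ℂ)) h2
  push_cast at c1 c2
  ext i j
  fin_cases i <;> fin_cases j <;>
    simp [Matrix.mul_apply, Fin.sum_univ_two, Matrix.one_apply, Complex.star_def,
      Complex.conj_ofReal] <;>
    [linear_combination c1; linear_combination c2]

lemma map_lemma (z r z' r' α β γ δ : ℝ)
    (hC : α^2 * (1+z) + γ^2 * (1-z) = 1 + z')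
    (hD : β^2 * (1-z) + δ^2 * (1+z) = 1 - z')
    (hE : (α*β + γ*δ) * r = r') :
    !![(α:ℂ), 0; 0, (β:ℂ)] * qubit z r * (!![(α:ℂ), 0; 0, (β:ℂ)])ᴴ
      + !![0, (γ:ℂ); (δ:ℂ), 0] * qubit z r * (!![0, (γ:ℂ); (δ:ℂ), 0])ᴴ = qubit z' r' := by
  have cC := congrArg (fun x : ℝ => (x : ℂ)) hC
  have cD := congrArg (fun x : ℝ => (x : ℂ)) hD
  have cE := congrArg (fun x : ℝ => (x : ℂ)) hE
  push_cast at cC cD cE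
  ext i j
  fin_cases i <;> fin_cases j <;>
    simp only [qubit, Matrix.add_apply, Matrix.mul_apply, Fin.sum_univ_two,
      Matrix.conjTranspose_apply, Matrix.smul_apply, Matrix.of_apply, cons_val',
      cons_val_zero, cons_val_one, head_cons, head_fin_const, empty_val',
      cons_val_fin_one, smul_eq_mul, star_zero, Complex.star_def, Complex.conj_ofReal,
      Fin.mk_zero, Fin.mk_one, map_zero, mul_zero, zero_mul, add_zero, zero_add] <;>
    [linear_combination cC/2; linear_combination cE/2; linear_combination cE/2;
     linear_combination cD/2]

lemma construct (r r' : ℝ) (hr1 : r ≤ 1) (hr'0 : 0 ≤ r') (hlt : r' < r) :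
    ∃ (n : ℕ) (K : Fin n → Matrix (Fin 2) (Fin 2) ℂ),
      (∀ i, Incoherent (K i)) ∧ (∑ i, (K i)ᴴ * K i = 1) ∧
      ∑ i, K i * qubit (Real.sqrt (1 - r ^ 2)) r * (K i)ᴴ
        = qubit (Real.sqrt (1 - r' ^ 2)) r' := by
  have hr0 : 0 < r := lt_of_le_of_lt hr'0 hlt
  have hr'1 : r' < 1 := lt_of_lt_of_le hlt hr1
  set z := Real.sqrt (1 - r ^ 2) with hzdef
  set z' := Real.sqrt (1 - r' ^ 2) with hz'def
  have hz2 : z ^ 2 = 1 - r ^ 2 := Real.sq_sqrt (by nlinarith)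
  have hz'2 : z' ^ 2 = 1 - r' ^ 2 := Real.sq_sqrt (by nlinarith)
  have hz0 : 0 ≤ z := Real.sqrt_nonneg _
  have hz'0 : 0 < z' := Real.sqrt_pos.mpr (by nlinarith)
  have hz1 : z < 1 := by nlinarith
  have hz'1 : z' ≤ 1 := by nlinarith
  have hzz' : z < z' := by nlinarith
  -- amplitudes
  set a := Real.sqrt ((1 + z)/2) with hadef
  set b := Real.sqrt ((1 - z)/2) with hbdef
  set a' := Real.sqrt ((1 + z')/2) with ha'def
  set b' := Real.sqrt ((1 - z')/2) with hb'def
  have ha2 : a ^ 2 = (1 + z)/2 := Real.sq_sqrt (by linarith)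
  have hb2 : b ^ 2 = (1 - z)/2 := Real.sq_sqrt (by linarith)
  have ha'2 : a' ^ 2 = (1 + z')/2 := Real.sq_sqrt (by linarith)
  have hb'2 : b' ^ 2 = (1 - z')/2 := Real.sq_sqrt (by linarith)
  have ha0 : 0 < a := Real.sqrt_pos.mpr (by linarith)
  have hb0 : 0 < b := Real.sqrt_pos.mpr (by linarith)
  have ha'0 : 0 ≤ a' := Real.sqrt_nonneg _
  have hb'0 : 0 ≤ b' := Real.sqrt_nonneg _
  have hab : 2 * (a * b) = r := by
    have : a * b = Real.sqrt (((1+z)/2) * ((1-z)/2)) := (Real.sqrt_mul (by linarith) _).symm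
    rw [this, show ((1+z)/2) * ((1-z)/2) = (1 - z^2)/4 by ring, hz2,
      show (1 - (1 - r^2))/4 = (r/2)^2 by ring, Real.sqrt_sq (by linarith)]
    ring
  have ha'b' : 2 * (a' * b') = r' := by
    have : a' * b' = Real.sqrt (((1+z')/2) * ((1-z')/2)) := (Real.sqrt_mul (by linarith) _).symm
    rw [this, show ((1+z')/2) * ((1-z')/2) = (1 - z'^2)/4 by ring, hz'2,
      show (1 - (1 - r'^2))/4 = (r'/2)^2 by ring, Real.sqrt_sq (by linarith)]
    ring
  -- probabilities
  set p := (z' + z)/(2*z') with hpdef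
  set q := (z' - z)/(2*z') with hqdef
  have hp0 : 0 ≤ p := by positivity
  have hq0 : 0 ≤ q := by
    apply div_nonneg (by linarith) (by linarith)
  set P := Real.sqrt p with hPdef
  set Q := Real.sqrt q with hQdef
  have hP2 : P ^ 2 = p := Real.sq_sqrt hp0
  have hQ2 : Q ^ 2 = q := Real.sq_sqrt hq0
  -- Kraus entries
  set α := P * a' / a with hαdef
  set β := P * b' / b with hβdef
  set γ := Q * a' / b with hγdef
  set δ := Q * b' / a with hδdef
  have hane := ha0.ne'
  have hbne := hb0.ne'
  have hz'ne := hz'0.ne'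
  have hpq : p + q = 1 := by rw [hpdef, hqdef]; field_simp; ring
  have hα2 : α ^ 2 = p * a' ^ 2 / a ^ 2 := by
    rw [hαdef, div_pow, mul_pow, hP2]
  have hβ2 : β ^ 2 = p * b' ^ 2 / b ^ 2 := by
    rw [hβdef, div_pow, mul_pow, hP2]
  have hγ2 : γ ^ 2 = q * a' ^ 2 / b ^ 2 := by
    rw [hγdef, div_pow, mul_pow, hQ2]
  have hδ2 : δ ^ 2 = q * b' ^ 2 / a ^ 2 := by
    rw [hδdef, div_pow, mul_pow, hQ2]
  have key1 : p * a' ^ 2 + q * b' ^ 2 = a ^ 2 := by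
    rw [ha'2, hb'2, ha2, hpdef, hqdef]; field_simp; ring
  have key2 : p * b' ^ 2 + q * a' ^ 2 = b ^ 2 := by
    rw [ha'2, hb'2, hb2, hpdef, hqdef]; field_simp; ring
  have id1 : α ^ 2 + δ ^ 2 = 1 := by
    rw [hα2, hδ2, ← add_div, key1, div_self (pow_ne_zero _ hane)]
  have id2 : β ^ 2 + γ ^ 2 = 1 := by
    rw [hβ2, hγ2, ← add_div]
    rw [show p * b' ^ 2 + q * a' ^ 2 = b ^ 2 from key2, div_self (pow_ne_zero _ hbne)]
  have idC : α ^ 2 * (1 + z) + γ ^ 2 * (1 - z) = 1 + z' := by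
    have h1z : 1 + z = 2 * a ^ 2 := by rw [ha2]; ring
    have h2z : 1 - z = 2 * b ^ 2 := by rw [hb2]; ring
    rw [hα2, hγ2, h1z, h2z]
    have : p * a' ^ 2 / a ^ 2 * (2 * a ^ 2) + q * a' ^ 2 / b ^ 2 * (2 * b ^ 2)
        = 2 * a' ^ 2 * (p + q) := by field_simp
    rw [this, hpq, ha'2]; ring
  have idD : β ^ 2 * (1 - z) + δ ^ 2 * (1 + z) = 1 - z' := by
    have h1z : 1 + z = 2 * a ^ 2 := by rw [ha2]; ring
    have h2z : 1 - z = 2 * b ^ 2 := by rw [hb2]; ring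
    rw [hβ2, hδ2, h1z, h2z]
    have : p * b' ^ 2 / b ^ 2 * (2 * b ^ 2) + q * b' ^ 2 / a ^ 2 * (2 * a ^ 2)
        = 2 * b' ^ 2 * (p + q) := by field_simp
    rw [this, hpq, hb'2]; ring
  have idE : (α * β + γ * δ) * r = r' := by
    have hαβ : α * β = p * (a' * b') / (a * b) := by
      rw [hαdef, hβdef, show P * a' / a * (P * b' / b) = P ^ 2 * (a' * b') / (a * b) by ring, hP2]
    have hγδ : γ * δ = q * (a' * b') / (a * b) := by
      rw [hγdef, hδdef, show Q * a' / b * (Q * b' / a) = Q ^ 2 * (a' * b') / (a * b) by ring, hQ2]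
    rw [hαβ, hγδ, ← add_div, ← add_mul, hpq, one_mul, ← hab, ← ha'b']
    field_simp
  refine ⟨2, ![!![(α:ℂ), 0; 0, (β:ℂ)], !![0, (γ:ℂ); (δ:ℂ), 0]], ?_, ?_, ?_⟩
  · intro i
    fin_cases i
    · exact incoh_diag _ _
    · exact incoh_anti _ _
  · rw [Fin.sum_univ_two]
    simp only [Matrix.cons_val_zero, Matrix.cons_val_one, Matrix.head_cons]
    exact complete_lemma α β γ δ id1 id2
  · rw [Fin.sum_univ_two]
    simp only [Matrix.cons_val_zero, Matrix.cons_val_one, Matrix.head_cons]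
    exact map_lemma z r z' r' α β γ δ idC idD idE

/-- Pure state transformations via IO: the pure state `ρ(√(1-r²), r)` can be
transformed by an incoherent operation into the pure state `ρ(√(1-r'²), r')`
if and only if `r' ≤ r`, i.e. iff the `l₁`-coherence does not increase. -/
theorem pure_state_io_transformation (r r' : ℝ)
    (hr : r ∈ Set.Icc (0 : ℝ) 1) (hr' : r' ∈ Set.Icc (0 : ℝ) 1) :
    (∃ (n : ℕ) (K : Fin n → Matrix (Fin 2) (Fin 2) ℂ),
      (∀ i, Incoherent (K i)) ∧ (∑ i, (K i)ᴴ * K i = 1) ∧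
      ∑ i, K i * qubit (Real.sqrt (1 - r ^ 2)) r * (K i)ᴴ
        = qubit (Real.sqrt (1 - r' ^ 2)) r') ↔ r' ≤ r := by
  obtain ⟨hr0, hr1⟩ := hr
  obtain ⟨hr'0, hr'1⟩ := hr'
  constructor
  · rintro ⟨n, K, hinc, hcomp, hmap⟩
    exact io_mono _ _ r r' hr0 hr'0 n K hinc hcomp hmap
  · intro hle
    rcases eq_or_lt_of_le hle with heq | hlt
    · subst heq
      refine ⟨1, ![1], ?_, ?_, ?_⟩
      · intro i
        fin_cases i
        intro j i i' h h'
        have hi : i = j := by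
          by_contra hne
          exact h (Matrix.one_apply_ne hne)
        have hi' : i' = j := by
          by_contra hne
          exact h' (Matrix.one_apply_ne hne)
        rw [hi, hi']
      · simp [Fin.sum_univ_one]
      · simp [Fin.sum_univ_one, Matrix.conjTranspose_one]
    · exact construct r r' hr1 hr'0 hlt
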